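/- Let X be a real Banach space and P : X → X a bounded linear projection (P² = P). Then P is numerically positive (i.e., for every x ∈ X with ‖x‖ = 1 there exists a norming functional x* with ‖x*‖ = 1, x*(x) = 1, and x*(Px) ≥ 0) if and only if ‖Id − P‖ ≤ 1. -/

import Mathlib

/-- A projection `P` on a real Banach space is numerically positive
(every norm-one `x` has a norming functional `f` with `f (P x) ≥ 0`)
iff `‖Id − P‖ ≤ 1`. -/
theorem stmt0 {X : Type*} [NormedAddCommGroup X] [NormedSpace ℝ X] [CompleteSpace X]
    (P : X →L[ℝ] X) (hP : P.comp P = P) :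
    (∀ x : X, ‖x‖ = 1 → ∃ f : X →L[ℝ] ℝ, ‖f‖ = 1 ∧ f x = 1 ∧ 0 ≤ f (P x)) ↔
      ‖ContinuousLinearMap.id ℝ X - P‖ ≤ 1 := by
  have hPP : ∀ y : X, P (P y) = P y := fun y => by
    have := ContinuousLinearMap.ext_iff.mp hP y
    simpa [ContinuousLinearMap.comp_apply] using this
  constructor
  · intro h
    -- Step 1: dissipativity
    have key : ∀ (α : ℝ), 0 ≤ α → ∀ x : X, ‖x‖ ≤ ‖x + α • P x‖ := by
      intro α hα x
      rcases eq_or_ne x 0 with rfl | hx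
      · simp
      · have hnx : ‖x‖ ≠ 0 := norm_ne_zero_iff.mpr hx
        set u := ‖x‖⁻¹ • x with hu
        have hun : ‖u‖ = 1 := by
          rw [hu, norm_smul, norm_inv, norm_norm, inv_mul_cancel₀ hnx]
        obtain ⟨f, hf1, hfu, hfP⟩ := h u hun
        have hxu : x = ‖x‖ • u := by
          rw [hu, smul_smul, mul_inv_cancel₀ hnx, one_smul]
        have hfx : f x = ‖x‖ := by
          have : f x = ‖x‖ * f u := by rw [← smul_eq_mul, ← map_smul, ← hxu]
          rw [this, hfu, mul_one]
        have hfPx : 0 ≤ f (P x) := by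
          have : f (P x) = ‖x‖ * f (P u) := by
            rw [← smul_eq_mul, ← map_smul, ← map_smul, ← hxu]
          rw [this]
          exact mul_nonneg (norm_nonneg x) hfP
        calc ‖x‖ = f x := hfx.symm
          _ ≤ f x + α * f (P x) := le_add_of_nonneg_right (mul_nonneg hα hfPx)
          _ = f (x + α • P x) := by rw [map_add, map_smul]; simp
          _ ≤ ‖f‖ * ‖x + α • P x‖ :=
              le_trans (le_abs_self _) (by simpa using f.le_opNorm (x + α • P x))
          _ = ‖x + α • P x‖ := by rw [hf1, one_mul]
    -- Step 2: ‖y - c • P y‖ ≤ ‖y‖ for 0 ≤ c < 1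
    have key2 : ∀ (c : ℝ), 0 ≤ c → c < 1 → ∀ y : X, ‖y - c • P y‖ ≤ ‖y‖ := by
      intro c hc0 hc1 y
      have h1c : (0:ℝ) < 1 - c := by linarith
      set α := c / (1 - c) with hαdef
      have hα : 0 ≤ α := div_nonneg hc0 h1c.le
      have heq : (y - c • P y) + α • P (y - c • P y) = y := by
        have h1 : P (y - c • P y) = (1 - c) • P y := by
          rw [map_sub, map_smul, hPP, sub_smul, one_smul]
        rw [h1, smul_smul]
        have : α * (1 - c) = c := by
          rw [hαdef]; field_simp
        rw [this, sub_add_cancel]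
      calc ‖y - c • P y‖ ≤ ‖(y - c • P y) + α • P (y - c • P y)‖ := key α hα _
        _ = ‖y‖ := by rw [heq]
    -- Step 3: conclude
    refine ContinuousLinearMap.opNorm_le_bound _ zero_le_one (fun y => ?_)
    rw [one_mul]
    have hyPy : ((ContinuousLinearMap.id ℝ X - P) y) = y - P y := by
      simp [ContinuousLinearMap.sub_apply]
    rw [hyPy]
    refine le_of_forall_pos_le_add (fun ε hε => ?_)
    set c : ℝ := 1 - min 1 (ε / (‖P y‖ + 1)) with hcdef
    have hPy1 : (0:ℝ) < ‖P y‖ + 1 := by positivity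
    have hmin_pos : 0 < min 1 (ε / (‖P y‖ + 1)) :=
      lt_min one_pos (div_pos hε hPy1)
    have hc0 : 0 ≤ c := by
      have : min 1 (ε / (‖P y‖ + 1)) ≤ 1 := min_le_left _ _
      simp only [hcdef]; linarith
    have hc1 : c < 1 := by simp only [hcdef]; linarith
    have hsplit : y - P y = (y - c • P y) - (1 - c) • P y := by
      have hsum : c + (1 - c) = (1:ℝ) := by ring
      have hadd : c • P y + (1 - c) • P y = P y := by
        rw [← add_smul, hsum, one_smul]
      rw [sub_sub, hadd]
    have hterm : ‖(1 - c) • P y‖ ≤ ε := by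
      rw [norm_smul, Real.norm_eq_abs]
      have h1c : 1 - c = min 1 (ε / (‖P y‖ + 1)) := by simp [hcdef]
      rw [h1c, abs_of_pos hmin_pos]
      calc min 1 (ε / (‖P y‖ + 1)) * ‖P y‖
          ≤ (ε / (‖P y‖ + 1)) * (‖P y‖ + 1) := by
            apply mul_le_mul (min_le_right _ _) (by linarith) (norm_nonneg _)
            positivity
        _ = ε := by field_simp
    calc ‖y - P y‖ = ‖(y - c • P y) - (1 - c) • P y‖ := by rw [← hsplit]
      _ ≤ ‖y - c • P y‖ + ‖(1 - c) • P y‖ := norm_sub_le _ _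
      _ ≤ ‖y‖ + ε := add_le_add (key2 c hc0 hc1 y) hterm
  · intro hle x hx
    have hx0 : x ≠ 0 := by
      intro h0; rw [h0, norm_zero] at hx; exact one_ne_zero hx.symm
    obtain ⟨f, hf1, hfx⟩ := exists_dual_vector ℝ x (norm_ne_zero_iff.mpr hx0)
    have hfx1 : f x = 1 := by rw [hfx, hx]; norm_num
    refine ⟨f, hf1, hfx1, ?_⟩
    have hbound : f (x - P x) ≤ 1 := by
      calc f (x - P x) ≤ ‖f‖ * ‖x - P x‖ :=
            le_trans (le_abs_self _) (f.le_opNorm _)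
        _ = ‖(ContinuousLinearMap.id ℝ X - P) x‖ := by
            rw [hf1, one_mul]; simp [ContinuousLinearMap.sub_apply]
        _ ≤ ‖ContinuousLinearMap.id ℝ X - P‖ * ‖x‖ :=
            (ContinuousLinearMap.id ℝ X - P).le_opNorm x
        _ ≤ 1 := by rw [hx, mul_one]; exact hle
    have : f (P x) = f x - f (x - P x) := by rw [map_sub]; ring
    rw [this, hfx1]
    linarith
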